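/- For r ≥ 2 and j ≥ 1 with r not dividing j, V_{r,j,n} = Σ_{k ≥ 0} W_{r, r^k j, n}, where V_{r,j,n} is the total multiplicity of the part j over all r-class regular partitions of n, and W_{r,j,n} = Σ_{ρ ∈ CP_{r,n}} #{i : m_i(ρ) ≥ j}. -/

import Mathlib

open Nat Finset
open scoped Classical

/-- The set of `r`-class regular partitions of `n`: no part divisible by `r`. -/
noncomputable def CP (r n : ℕ) : Finset (n.Partition) :=
  Finset.univ.filter (fun l => ∀ p ∈ l.parts, ¬ r ∣ p)

/-- The number of part-sizes `i` whose multiplicity in `ρ` is at least `j` (for `j ≥ 1`). -/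
noncomputable def numGE {n : ℕ} (ρ : n.Partition) (j : ℕ) : ℕ :=
  (ρ.parts.toFinset.filter (fun i => j ≤ ρ.parts.count i)).card

/-- `V r j n = Σ_{ρ ∈ CP_{r,n}} m_j(ρ)`. -/
noncomputable def V (r j n : ℕ) : ℕ := ∑ ρ ∈ CP r n, ρ.parts.count j

/-- `W r j n = Σ_{ρ ∈ CP_{r,n}} #{i : m_i(ρ) ≥ j}`. -/
noncomputable def W (r j n : ℕ) : ℕ := ∑ ρ ∈ CP r n, numGE ρ j

/-! ### Auxiliary definitions and lemmas -/

/-- `A r n i c` is the number of `r`-class regular partitions of `n` having at least `c`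
copies of the part `i`. -/
noncomputable def A (r n i c : ℕ) : ℕ :=
  ((CP r n).filter (fun ρ => c ≤ ρ.parts.count i)).card

lemma mem_CP {r n : ℕ} {ρ : n.Partition} : ρ ∈ CP r n ↔ ∀ p ∈ ρ.parts, ¬ r ∣ p := by
  simp [CP]

lemma count_mul_le {n : ℕ} (ρ : n.Partition) (i : ℕ) : i * ρ.parts.count i ≤ n := by
  have h : Multiset.replicate (ρ.parts.count i) i ≤ ρ.parts :=
    Multiset.le_count_iff_replicate_le.mp le_rfl
  obtain ⟨u, hu⟩ := Multiset.le_iff_exists_add.mp h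
  have h2 := congrArg Multiset.sum hu
  rw [Multiset.sum_add, Multiset.sum_replicate, ρ.parts_sum] at h2
  simp only [smul_eq_mul] at h2
  have : ρ.parts.count i * i = i * ρ.parts.count i := mul_comm _ _
  omega

lemma part_le {n : ℕ} (ρ : n.Partition) {i : ℕ} (hi : i ∈ ρ.parts) : i ≤ n := by
  have := Multiset.single_le_sum (fun x _ => Nat.zero_le x) i hi
  simpa [ρ.parts_sum] using this

/-- Key bijection: removing `c` copies of the part `i`. -/
lemma A_eq (r n i c : ℕ) (hi : ¬ r ∣ i) (hcn : i * c ≤ n) :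
    A r n i c = (CP r (n - i * c)).card := by
  have hipos : 0 < i := by
    rcases Nat.eq_zero_or_pos i with h | h
    · exact absurd (h ▸ dvd_zero r) hi
    · exact h
  refine Finset.card_bij'
    (fun ρ hρ =>
      have hcount : c ≤ ρ.parts.count i := (Finset.mem_filter.mp hρ).2
      have hle : Multiset.replicate c i ≤ ρ.parts :=
        Multiset.le_count_iff_replicate_le.mp hcount
      ⟨ρ.parts - Multiset.replicate c i,
        fun {p} hp => ρ.parts_pos (Multiset.mem_of_le tsub_le_self hp),
        by
          have h3 := congrArg Multiset.sum (tsub_add_cancel_of_le hle)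
          rw [Multiset.sum_add, Multiset.sum_replicate, ρ.parts_sum] at h3
          simp only [smul_eq_mul] at h3
          have : c * i = i * c := mul_comm _ _
          omega⟩)
    (fun σ _ =>
      ⟨σ.parts + Multiset.replicate c i,
        fun {p} hp => by
          rcases Multiset.mem_add.mp hp with h | h
          · exact σ.parts_pos h
          · rw [Multiset.eq_of_mem_replicate h]; exact hipos,
        by
          rw [Multiset.sum_add, σ.parts_sum, Multiset.sum_replicate]
          simp only [smul_eq_mul]
          have : c * i = i * c := mul_comm _ _
          omega⟩)
    (fun ρ hρ => by
      rw [mem_CP]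
      intro p hp
      exact mem_CP.mp (Finset.mem_filter.mp hρ).1 p (Multiset.mem_of_le tsub_le_self hp))
    (fun σ hσ => by
      rw [Finset.mem_filter]
      constructor
      · rw [mem_CP]
        intro p hp
        rcases Multiset.mem_add.mp hp with h | h
        · exact mem_CP.mp hσ p h
        · rw [Multiset.eq_of_mem_replicate h]; exact hi
      · simp [Multiset.count_add, Multiset.count_replicate])
    (fun ρ hρ => by
      have hcount : c ≤ ρ.parts.count i := (Finset.mem_filter.mp hρ).2
      have hle : Multiset.replicate c i ≤ ρ.parts :=
        Multiset.le_count_iff_replicate_le.mp hcount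
      apply Nat.Partition.ext
      exact tsub_add_cancel_of_le hle)
    (fun σ hσ => by
      apply Nat.Partition.ext
      simp)

lemma A_eq_zero_of_gt (r n i c : ℕ) (h : n < i * c) : A r n i c = 0 := by
  rw [A, Finset.card_eq_zero, Finset.filter_eq_empty_iff]
  intro ρ _
  intro hc
  have h1 := count_mul_le ρ i
  have h2 : i * c ≤ i * ρ.parts.count i := Nat.mul_le_mul_left i hc
  omega

lemma A_eq_zero_of_dvd (r n i c : ℕ) (hc : 1 ≤ c) (hdvd : r ∣ i) : A r n i c = 0 := by
  rw [A, Finset.card_eq_zero, Finset.filter_eq_empty_iff]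
  intro ρ hρ
  intro hcount
  have hmem : i ∈ ρ.parts := Multiset.count_pos.mp (by omega)
  exact mem_CP.mp hρ i hmem hdvd

lemma count_eq_sum {n : ℕ} (ρ : n.Partition) (j : ℕ) (hj : 1 ≤ j) :
    ρ.parts.count j = ∑ k ∈ Icc 1 n, if k ≤ ρ.parts.count j then 1 else 0 := by
  have hle : ρ.parts.count j ≤ n := by
    have := count_mul_le ρ j
    have h2 : ρ.parts.count j ≤ j * ρ.parts.count j := Nat.le_mul_of_pos_left _ hj
    omega
  rw [← Finset.card_filter]
  have : (Icc 1 n).filter (fun k => k ≤ ρ.parts.count j) = Icc 1 (ρ.parts.count j) := by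
    ext k
    simp only [Finset.mem_filter, Finset.mem_Icc]
    omega
  rw [this, Nat.card_Icc]
  omega

lemma V_eq (r j n : ℕ) (hj : 1 ≤ j) : V r j n = ∑ k ∈ Icc 1 n, A r n j k := by
  rw [V]
  rw [Finset.sum_congr rfl (fun ρ _ => count_eq_sum ρ j hj), Finset.sum_comm]
  refine Finset.sum_congr rfl (fun k _ => ?_)
  rw [A, Finset.card_filter]

lemma numGE_eq {n : ℕ} (ρ : n.Partition) (J : ℕ) (hJ : 1 ≤ J) :
    numGE ρ J = ((Icc 1 n).filter (fun i => J ≤ ρ.parts.count i)).card := by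
  rw [numGE]
  congr 1
  ext i
  simp only [Finset.mem_filter, Multiset.mem_toFinset, Finset.mem_Icc]
  constructor
  · rintro ⟨hmem, hcount⟩
    exact ⟨⟨ρ.parts_pos hmem, part_le ρ hmem⟩, hcount⟩
  · rintro ⟨_, hcount⟩
    refine ⟨Multiset.count_pos.mp (by omega), hcount⟩

lemma W_eq (r J n : ℕ) (hJ : 1 ≤ J) : W r J n = ∑ i ∈ Icc 1 n, A r n i J := by
  rw [W]
  rw [Finset.sum_congr rfl (fun ρ _ => by
    rw [numGE_eq ρ J hJ, Finset.card_filter])]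
  rw [Finset.sum_comm]
  refine Finset.sum_congr rfl (fun i _ => ?_)
  rw [A, Finset.card_filter]

lemma W_eq_zero (r J n : ℕ) (hJ : 1 ≤ J) (hJn : n < J) : W r J n = 0 := by
  rw [W_eq r J n hJ]
  refine Finset.sum_eq_zero (fun i hi => ?_)
  rw [Finset.mem_Icc] at hi
  refine A_eq_zero_of_gt r n i J ?_
  calc n < J := hJn
    _ = 1 * J := (one_mul J).symm
    _ ≤ i * J := Nat.mul_le_mul_right J hi.1

/-- The `r`-adic valuation (for possibly non-prime `r ≥ 2`). -/
noncomputable def ordR (r m : ℕ) : ℕ := Nat.findGreatest (fun t => r ^ t ∣ m) m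

lemma ordR_dvd (r m : ℕ) : r ^ (ordR r m) ∣ m :=
  Nat.findGreatest_spec (P := fun t => r ^ t ∣ m) (Nat.zero_le m) (by simp)

lemma ordR_not_dvd_div (r m : ℕ) (hr : 2 ≤ r) (hm : 1 ≤ m) : ¬ r ∣ m / r ^ (ordR r m) := by
  intro hdvd
  have hd := ordR_dvd r m
  obtain ⟨q, hq⟩ := hdvd
  have hpow : 0 < r ^ (ordR r m) := pow_pos (by omega) _
  have hmq : m = r ^ (ordR r m + 1) * q := by
    have := Nat.div_mul_cancel hd
    rw [pow_succ]
    calc m = m / r ^ (ordR r m) * r ^ (ordR r m) := (Nat.div_mul_cancel hd).symm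
      _ = (r * q) * r ^ (ordR r m) := by rw [hq]
      _ = r ^ (ordR r m) * r * q := by ring
  have hdvd1 : r ^ (ordR r m + 1) ∣ m := ⟨q, hmq⟩
  have hle : r ^ (ordR r m + 1) ≤ m := Nat.le_of_dvd (by omega) hdvd1
  have h2 : ordR r m + 1 < 2 ^ (ordR r m + 1) := Nat.lt_two_pow_self
  have h3 : 2 ^ (ordR r m + 1) ≤ r ^ (ordR r m + 1) := Nat.pow_le_pow_left hr _
  have hkb : ordR r m + 1 ≤ m := by omega
  exact Nat.findGreatest_is_greatest (Nat.lt_succ_self _) hkb hdvd1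

lemma ordR_pow_mul (r k i : ℕ) (hr : 2 ≤ r) (hi : ¬ r ∣ i) : ordR r (r ^ k * i) = k := by
  have hipos : 0 < i := by
    rcases Nat.eq_zero_or_pos i with h | h
    · exact absurd (h ▸ dvd_zero r) hi
    · exact h
  have hrk : 0 < r ^ k := pow_pos (by omega) _
  have hk_le : k ≤ ordR r (r ^ k * i) := by
    refine Nat.le_findGreatest ?_ ⟨i, rfl⟩
    calc k ≤ 2 ^ k := (Nat.lt_two_pow_self (n := k)).le
      _ ≤ r ^ k := Nat.pow_le_pow_left hr k
      _ ≤ r ^ k * i := Nat.le_mul_of_pos_right _ hipos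
  have hle_k : ordR r (r ^ k * i) ≤ k := by
    by_contra h
    push_neg at h
    have hdvd1 : r ^ (k + 1) ∣ r ^ (ordR r (r ^ k * i)) := pow_dvd_pow r (by omega)
    have hdvd2 : r ^ (k + 1) ∣ r ^ k * i := hdvd1.trans (ordR_dvd r _)
    rw [pow_succ] at hdvd2
    have : r ∣ i := (mul_dvd_mul_iff_left (a := r ^ k) (by omega)).mp hdvd2
    exact hi this
  omega

theorem V_eq_tsum_W (r j n : ℕ) (hr : 2 ≤ r) (hj : 1 ≤ j) (hjr : ¬ r ∣ j) :
    V r j n = ∑' k : ℕ, W r (r ^ k * j) n := by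
  have hrpos : 0 < r := by omega
  -- the terms vanish for k ≥ n
  have hW0 : ∀ k : ℕ, k ∉ Finset.range n → W r (r ^ k * j) n = 0 := by
    intro k hk
    rw [Finset.mem_range, not_lt] at hk
    refine W_eq_zero r _ n (Nat.mul_pos (pow_pos (by omega) k) hj) ?_
    have h1 : n < 2 ^ n := Nat.lt_two_pow_self (n := n)
    have h2 : 2 ^ n ≤ 2 ^ k := Nat.pow_le_pow_right (by omega) hk
    have h3 : 2 ^ k ≤ r ^ k := Nat.pow_le_pow_left hr k
    have h4 : r ^ k ≤ r ^ k * j := Nat.le_mul_of_pos_right _ hj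
    omega
  rw [tsum_eq_sum hW0]
  -- the common value function
  set g : ℕ → ℕ := fun m => if m * j ≤ n then (CP r (n - m * j)).card else 0 with hg
  -- LHS
  have hL : V r j n = ∑ m ∈ Icc 1 n, g m := by
    rw [V_eq r j n hj]
    refine Finset.sum_congr rfl (fun m hm => ?_)
    simp only [hg]
    by_cases h : m * j ≤ n
    · rw [if_pos h, A_eq r n j m hjr (by rw [mul_comm]; exact h), mul_comm]
    · rw [if_neg h, A_eq_zero_of_gt r n j m (by rw [mul_comm] at h; omega)]
  -- RHS
  have hR : ∀ k : ℕ, W r (r ^ k * j) n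
      = ∑ i ∈ (Icc 1 n).filter (fun i => ¬ r ∣ i), g (r ^ k * i) := by
    intro k
    rw [W_eq r _ n (Nat.mul_pos (pow_pos hrpos k) hj)]
    rw [← Finset.sum_filter_add_sum_filter_not (Icc 1 n) (fun i => ¬ r ∣ i)]
    have hzero : ∑ i ∈ (Icc 1 n).filter (fun i => ¬ ¬ r ∣ i), A r n i (r ^ k * j) = 0 := by
      refine Finset.sum_eq_zero (fun i hi => ?_)
      rw [Finset.mem_filter, not_not] at hi
      exact A_eq_zero_of_dvd r n i _ (Nat.mul_pos (pow_pos hrpos k) hj) hi.2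
    rw [hzero, add_zero]
    refine Finset.sum_congr rfl (fun i hi => ?_)
    rw [Finset.mem_filter] at hi
    simp only [hg]
    have harg : i * (r ^ k * j) = r ^ k * i * j := by ring
    by_cases h : r ^ k * i * j ≤ n
    · rw [if_pos h, A_eq r n i _ hi.2 (by omega), harg]
    · rw [if_neg h, A_eq_zero_of_gt r n i _ (by omega)]
  rw [hL]
  rw [Finset.sum_congr rfl (fun k _ => hR k)]
  -- turn double sum into a sum over a product, restricted to small values
  rw [← Finset.sum_product']
  set P := (Finset.range n) ×ˢ ((Icc 1 n).filter (fun i => ¬ r ∣ i)) with hP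
  have hsub : P.filter (fun p => r ^ p.1 * p.2 ≤ n) ⊆ P := Finset.filter_subset _ _
  rw [← Finset.sum_subset hsub ?_]
  swap
  · intro p hp hnp
    rw [Finset.mem_filter, not_and] at hnp
    have : ¬ r ^ p.1 * p.2 ≤ n := hnp hp
    simp only [hg]
    rw [if_neg]
    intro hcon
    have : r ^ p.1 * p.2 ≤ r ^ p.1 * p.2 * j := Nat.le_mul_of_pos_right _ hj
    omega
  -- the bijection (k, i) ↦ r^k * i
  refine (Finset.sum_bij' (fun p _ => r ^ p.1 * p.2) (fun m _ => (ordR r m, m / r ^ (ordR r m)))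
    ?_ ?_ ?_ ?_ ?_).symm
  · -- forward membership
    rintro ⟨k, i⟩ hp
    rw [Finset.mem_filter, hP, Finset.mem_product, Finset.mem_filter, Finset.mem_Icc] at hp
    rw [Finset.mem_Icc]
    refine ⟨?_, hp.2⟩
    have : 0 < r ^ k := pow_pos hrpos _
    have : 1 ≤ i := hp.1.2.1.1
    calc 1 ≤ r ^ k * 1 := by omega
      _ ≤ r ^ k * i := Nat.mul_le_mul_left _ this
  · -- backward membership
    intro m hm
    rw [Finset.mem_Icc] at hm
    have hdvd := ordR_dvd r m
    have hpow : 0 < r ^ (ordR r m) := pow_pos hrpos _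
    have hple : r ^ (ordR r m) ≤ m := Nat.le_of_dvd (by omega) hdvd
    have hord_lt : ordR r m < n := by
      have h1 : ordR r m < 2 ^ (ordR r m) := Nat.lt_two_pow_self
      have h2 : 2 ^ (ordR r m) ≤ r ^ (ordR r m) := Nat.pow_le_pow_left hr _
      omega
    rw [Finset.mem_filter, hP, Finset.mem_product, Finset.mem_filter, Finset.mem_Icc,
      Finset.mem_range]
    have hdivpos : 1 ≤ m / r ^ (ordR r m) := (Nat.one_le_div_iff hpow).mpr hple
    have hdivle : m / r ^ (ordR r m) ≤ n := le_trans (Nat.div_le_self _ _) hm.2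
    refine ⟨⟨hord_lt, ⟨hdivpos, hdivle⟩, ordR_not_dvd_div r m hr (by omega)⟩, ?_⟩
    rw [Nat.mul_div_cancel' hdvd]
    exact hm.2
  · -- left inverse
    rintro ⟨k, i⟩ hp
    rw [Finset.mem_filter, hP, Finset.mem_product, Finset.mem_filter, Finset.mem_Icc] at hp
    have hord := ordR_pow_mul r k i hr hp.1.2.2
    have hpow : 0 < r ^ k := pow_pos hrpos _
    ext
    · simp [hord]
    · simp only [hord]
      exact Nat.mul_div_cancel_left i hpow
  · -- right inverse
    intro m hm
    exact Nat.mul_div_cancel' (ordR_dvd r m)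
  · -- values agree
    rintro ⟨k, i⟩ _
    rfl
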